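/- If a quiver is not strongly connected, then there is a nontrivial partition of the vertex set Q0 = S ⊔ S' such that every arrow between S and S' goes from S to S' (no arrows from S' to S), and consequently every conserved current vanishes on some arrow (it cannot be strictly positive) whenever there is at least one arrow from S to S'. -/

import Mathlib

open Relation

/-- One directed step along an arrow of the quiver. -/
def QStep {V A : Type} (s t : A → V) (i j : V) : Prop := ∃ a : A, s a = i ∧ t a = j

/-- One undirected step along an arrow of the quiver. -/
def UStep {V A : Type} (s t : A → V) (i j : V) : Prop :=
  ∃ a : A, (s a = i ∧ t a = j) ∨ (s a = j ∧ t a = i)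

/-- A current is conserved if at each vertex the incoming total equals the outgoing total. -/
def Conserved {V A : Type} [Fintype A] [DecidableEq V] (s t : A → V) (lam : A → ℝ) : Prop :=
  ∀ i : V, ∑ a ∈ Finset.univ.filter (fun a => t a = i), lam a
         = ∑ a ∈ Finset.univ.filter (fun a => s a = i), lam a

/-- A simple oriented cycle of the quiver: a nonempty cyclically composable list of arrows
whose sources are pairwise distinct. -/
structure SimpleCycle {V A : Type} (s t : A → V) where
  arrows : List A
  nonempty : arrows ≠ []
  chain : ∀ k : ℕ, ∀ h : k < arrows.length,
    t (arrows.get ⟨k, h⟩) =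
      s (arrows.get ⟨(k + 1) % arrows.length, Nat.mod_lt _ (List.length_pos_iff.mpr nonempty)⟩)
  simple : (arrows.map s).Nodup

/-- If a quiver is not strongly connected, there is a nontrivial partition `S ⊔ Sᶜ`
of the vertices with no arrow from `Sᶜ` to `S`; consequently, if there is at least one
arrow from `S` to `Sᶜ`, no conserved current can be strictly positive. -/
lemma sum_fiber_aux {V A : Type} [Fintype A] [DecidableEq V] (f : A → V) (T : Finset V)
    (lam : A → ℝ) :
    ∑ i ∈ T, ∑ a ∈ Finset.univ.filter (fun a => f a = i), lam a
      = ∑ a ∈ Finset.univ.filter (fun a => f a ∈ T), lam a := by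
  have key := Finset.sum_fiberwise_of_maps_to (s := Finset.univ.filter (fun a => f a ∈ T))
    (t := T) (g := f) (fun a ha => (Finset.mem_filter.mp ha).2) lam
  rw [← key]
  refine Finset.sum_congr rfl fun i hi => ?_
  refine Finset.sum_congr ?_ fun _ _ => rfl
  ext a
  simp only [Finset.mem_filter, Finset.mem_univ, true_and]
  constructor
  · intro h; exact ⟨h ▸ hi, h⟩
  · tauto

theorem stmt2 {V A : Type} [Fintype V] [Fintype A] [DecidableEq V]
    (s t : A → V)
    (hns : ¬ ∀ i j : V, Relation.ReflTransGen (QStep s t) i j) :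
    ∃ S : Set V, S.Nonempty ∧ Sᶜ.Nonempty ∧
      (∀ a : A, ¬ (s a ∉ S ∧ t a ∈ S)) ∧
      ((∃ a : A, s a ∈ S ∧ t a ∉ S) →
        ∀ lam : A → ℝ, Conserved s t lam → ¬ (∀ a : A, 0 < lam a)) := by
  classical
  push_neg at hns
  obtain ⟨i, j, hij⟩ := hns
  refine ⟨{v | Relation.ReflTransGen (QStep s t) v j}, ⟨j, Relation.ReflTransGen.refl⟩,
    ⟨i, hij⟩, ?_, ?_⟩
  · rintro a ⟨hsa, hta⟩
    exact hsa (Relation.ReflTransGen.head ⟨a, rfl, rfl⟩ hta)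
  · set S : Set V := {v | Relation.ReflTransGen (QStep s t) v j} with hS
    rintro ⟨a0, hsa0, hta0⟩ lam hcons hpos
    set T : Finset V := Finset.univ.filter (fun v => v ∈ S) with hT
    have hmem : ∀ v : V, v ∈ T ↔ v ∈ S := by
      intro v; simp [hT]
    have hsum : ∑ a ∈ Finset.univ.filter (fun a => t a ∈ T), lam a
        = ∑ a ∈ Finset.univ.filter (fun a => s a ∈ T), lam a := by
      rw [← sum_fiber_aux t T lam, ← sum_fiber_aux s T lam]
      exact Finset.sum_congr rfl fun v _ => hcons v
    have hnoback : ∀ a : A, ¬ (s a ∉ S ∧ t a ∈ S) := by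
      rintro a ⟨hsa, hta⟩
      exact hsa (Relation.ReflTransGen.head ⟨a, rfl, rfl⟩ hta)
    have hsplitL : Finset.univ.filter (fun a => t a ∈ T)
        = Finset.univ.filter (fun a => s a ∈ T ∧ t a ∈ T) := by
      ext a
      simp only [Finset.mem_filter, Finset.mem_univ, true_and, hmem]
      constructor
      · intro h
        refine ⟨?_, h⟩
        by_contra hc
        exact hnoback a ⟨hc, h⟩
      · exact fun h => h.2
    have hsplitR : ∑ a ∈ Finset.univ.filter (fun a => s a ∈ T), lam a
        = ∑ a ∈ Finset.univ.filter (fun a => s a ∈ T ∧ t a ∈ T), lam a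
          + ∑ a ∈ Finset.univ.filter (fun a => s a ∈ T ∧ t a ∉ T), lam a := by
      rw [← Finset.sum_union]
      · refine Finset.sum_congr ?_ fun _ _ => rfl
        ext a
        simp only [Finset.mem_union, Finset.mem_filter, Finset.mem_univ, true_and]
        tauto
      · rw [Finset.disjoint_left]
        intro a ha hb
        simp only [Finset.mem_filter, Finset.mem_univ, true_and] at ha hb
        exact hb.2 ha.2
    rw [hsplitL, hsplitR] at hsum
    have hzero : ∑ a ∈ Finset.univ.filter (fun a => s a ∈ T ∧ t a ∉ T), lam a = 0 := by
      linarith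
    have hne : (Finset.univ.filter (fun a => s a ∈ T ∧ t a ∉ T)).Nonempty := by
      refine ⟨a0, ?_⟩
      simp only [Finset.mem_filter, Finset.mem_univ, true_and, hmem]
      exact ⟨hsa0, hta0⟩
    have := Finset.sum_pos (fun a _ => hpos a) hne
    linarith
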